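/- Let Φ be a 3-CNF formula with clauses C_1,…,C_n and variables A_1,…,A_m, and let P^Φ be the associated disjunctive program. If E is an elementary set for P^Φ containing both c_0 and c_{n+1}, then E contains c_j for every 1 ≤ j ≤ n. -/
import Mathlib


structure Rule (α : Type) where
  B : Finset α
  F : Finset α
  H : Finset α

variable {α : Type}

/-- Z is outbound in Y for program P. -/
def Outbound [DecidableEq α] (P : Set (Rule α)) (Y Z : Finset α) : Prop :=
  ∃ r ∈ P, (r.H ∩ Z).Nonempty ∧ (r.B ∩ (Y \ Z)).Nonempty ∧
    r.B ∩ Z = ∅ ∧ r.H ∩ (Y \ Z) = ∅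

/-- Y is an elementary set for P. -/
def Elementary [DecidableEq α] (P : Set (Rule α)) (Y : Finset α) : Prop :=
  Y.Nonempty ∧ ∀ Z : Finset α, Z ⊂ Y → Z.Nonempty → Outbound P Y Z

/-- X is a disjunctive set for P. -/
def DisjSet [DecidableEq α] (P : Set (Rule α)) (X : Finset α) : Prop :=
  ∃ r ∈ P, 1 < (r.H ∩ X).card

/-- The projection P_X of P on a set X of atoms. -/
def proj [DecidableEq α] (P : Set (Rule α)) (X : Finset α) : Set (Rule α) :=
  {r' | ∃ r ∈ P, (r.B ∩ X).Nonempty ∧ (r.H ∩ X).Nonempty ∧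
        r' = ⟨r.B ∩ X, ∅, r.H ∩ X⟩}

/-- P is head-elementary-set-free. -/
def HEF [DecidableEq α] (P : Set (Rule α)) : Prop :=
  ∀ r ∈ P, ∀ E : Finset α, Elementary P E → (E ∩ r.H).card ≤ 1

/-- Atoms of the program `P^Φ`. -/
inductive Atom : Type
  | phi : Atom
  | a : ℕ → Atom
  | na : ℕ → Atom
  | c : ℕ → Atom
deriving DecidableEq

/-- The atom opposite to a literal (variable index, sign). -/
def oppAtom : ℕ × Bool → Atom
  | (v, true) => Atom.na v
  | (v, false) => Atom.a v

/-- The atom corresponding to a literal. -/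
def litAtom : ℕ × Bool → Atom
  | (v, true) => Atom.a v
  | (v, false) => Atom.na v

/-- NV(c_i): opposites of the atoms of the literals of clause C_i. -/
def NV (C : ℕ → Fin 3 → ℕ × Bool) (i : ℕ) : Finset Atom :=
  {oppAtom (C i 0), oppAtom (C i 1), oppAtom (C i 2)}

/-- The program `P^Φ` associated with a 3-CNF with m variables `A_1,…,A_m`
and n clauses `C_1,…,C_n`, the clauses given by `C`. -/
def PPhi (m n : ℕ) (C : ℕ → Fin 3 → ℕ × Bool) : Set (Rule Atom) :=
  ({⟨{Atom.phi}, ∅, {Atom.c 0, Atom.c (n+1)}⟩,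
    ⟨{Atom.c 0}, ∅, {Atom.c 1}⟩,
    ⟨{Atom.c (n+1), Atom.na 1}, ∅, {Atom.a 1}⟩,
    ⟨{Atom.c (n+1), Atom.a 1}, ∅, {Atom.na 1}⟩,
    ⟨{Atom.a m, Atom.na m}, ∅, {Atom.c 0}⟩} : Set (Rule Atom)) ∪
  {r | ∃ i ∈ Finset.Icc 1 n, ∃ α ∈ NV C i,
        r = ⟨{Atom.c i, α}, ∅, {Atom.c (i+1)}⟩} ∪
  {r | ∃ i ∈ Finset.Icc 1 (m-1),
        r = ⟨{Atom.a i, Atom.na (i+1)}, ∅, {Atom.a (i+1)}⟩ ∨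
        r = ⟨{Atom.a i, Atom.a (i+1)}, ∅, {Atom.na (i+1)}⟩ ∨
        r = ⟨{Atom.na i, Atom.na (i+1)}, ∅, {Atom.a (i+1)}⟩ ∨
        r = ⟨{Atom.na i, Atom.a (i+1)}, ∅, {Atom.na (i+1)}⟩}

/-- All variable indices mentioned by clauses 1..n lie in [1,m]. -/
def ValidCNF (m n : ℕ) (C : ℕ → Fin 3 → ℕ × Bool) : Prop :=
  ∀ i ∈ Finset.Icc 1 n, ∀ j : Fin 3, (C i j).1 ∈ Finset.Icc 1 m

/-- Truth assignment X satisfies the 3-CNF. -/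
def Sat (n : ℕ) (C : ℕ → Fin 3 → ℕ × Bool) (X : ℕ → Bool) : Prop :=
  ∀ i ∈ Finset.Icc 1 n, ∃ j : Fin 3, X (C i j).1 = (C i j).2


lemma oppAtom_ne_c (p : ℕ × Bool) (k : ℕ) : oppAtom p ≠ Atom.c k := by
  obtain ⟨v, b⟩ := p; cases b <;> simp [oppAtom]

theorem stmt9 (m n : ℕ) (hm : 1 ≤ m) (hn : 1 ≤ n)
    (C : ℕ → Fin 3 → ℕ × Bool) (hC : ValidCNF m n C)
    (E : Finset Atom) (hE : Elementary (PPhi m n C) E)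
    (h0 : Atom.c 0 ∈ E) (h1 : Atom.c (n+1) ∈ E) :
    ∀ j ∈ Finset.Icc 1 n, Atom.c j ∈ E := by
  intro j hj
  rw [Finset.mem_Icc] at hj
  by_contra hcj
  set img : Finset Atom := (Finset.range j).image Atom.c with himg
  set Z : Finset Atom := E \ img with hZdef
  have hmemEdZ : ∀ x ∈ E \ Z, x ∈ E ∧ ∃ k < j, x = Atom.c k := by
    intro x hx
    rw [hZdef, Finset.mem_sdiff, Finset.mem_sdiff] at hx
    refine ⟨hx.1, ?_⟩
    have hxi : x ∈ img := by tauto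
    rw [himg, Finset.mem_image] at hxi
    obtain ⟨k, hk, rfl⟩ := hxi
    exact ⟨k, Finset.mem_range.1 hk, rfl⟩
  have hmemZ : ∀ x, x ∈ Z ↔ x ∈ E ∧ ∀ k < j, x ≠ Atom.c k := by
    intro x
    rw [hZdef, Finset.mem_sdiff, himg, Finset.mem_image]
    constructor
    · rintro ⟨hxe, hni⟩
      exact ⟨hxe, fun k hk he => hni ⟨k, Finset.mem_range.2 hk, he.symm⟩⟩
    · rintro ⟨hxe, hni⟩
      exact ⟨hxe, fun ⟨k, hk, he⟩ => hni k (Finset.mem_range.1 hk) he.symm⟩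
  have hcn1Z : Atom.c (n+1) ∈ Z := (hmemZ _).2 ⟨h1, fun k hk he => by
    simp only [Atom.c.injEq] at he; omega⟩
  have hZne : Z.Nonempty := ⟨_, hcn1Z⟩
  have hZss : Z ⊂ E := by
    refine ⟨Finset.sdiff_subset, fun hs => ?_⟩
    exact ((hmemZ _).1 (hs h0)).2 0 (by omega) rfl
  obtain ⟨r, hr, hH, hB, hBZ, hHY⟩ := hE.2 Z hZss hZne
  simp only [PPhi, Set.mem_union, Set.mem_insert_iff, Set.mem_singleton_iff,
    Set.mem_setOf_eq] at hr
  rcases hr with ((h | h | h | h | h) | ⟨i, hi, α, hα, h⟩) | ⟨i, hi, h | h | h | h⟩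
  · -- rule 1 : φ → c0 ∨ c(n+1)
    subst h
    obtain ⟨x, hx⟩ := hB
    rw [Finset.mem_inter, Finset.mem_singleton] at hx
    obtain ⟨rfl, hx2⟩ := hx
    obtain ⟨-, k, -, hk⟩ := hmemEdZ _ hx2
    simp at hk
  · -- rule 2 : c0 → c1
    subst h
    obtain ⟨x, hx⟩ := hH
    rw [Finset.mem_inter, Finset.mem_singleton] at hx
    obtain ⟨rfl, hx2⟩ := hx
    obtain ⟨hc1E, hc1⟩ := (hmemZ _).1 hx2
    have hj1 : j = 1 := by
      by_contra hne
      exact hc1 1 (by omega) rfl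
    rw [hj1] at hcj; exact hcj hc1E
  · -- rule 4
    subst h
    have : Atom.c (n+1) ∈ ({Atom.c (n+1), Atom.na 1} : Finset Atom) ∩ Z :=
      Finset.mem_inter.2 ⟨by simp, hcn1Z⟩
    rw [hBZ] at this; exact absurd this (Finset.notMem_empty _)
  · -- rule 5
    subst h
    have : Atom.c (n+1) ∈ ({Atom.c (n+1), Atom.a 1} : Finset Atom) ∩ Z :=
      Finset.mem_inter.2 ⟨by simp, hcn1Z⟩
    rw [hBZ] at this; exact absurd this (Finset.notMem_empty _)
  · -- rule 10 : a_m ∧ na_m → c0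
    subst h
    obtain ⟨x, hx⟩ := hB
    rw [Finset.mem_inter, Finset.mem_insert, Finset.mem_singleton] at hx
    obtain ⟨hx1, hx2⟩ := hx
    obtain ⟨-, k, -, hk⟩ := hmemEdZ _ hx2
    rcases hx1 with rfl | rfl <;> simp at hk
  · -- clause rules
    have hαc : ∀ k, α ≠ Atom.c k := by
      simp only [NV, Finset.mem_insert, Finset.mem_singleton] at hα
      rcases hα with rfl | rfl | rfl <;> exact fun k => oppAtom_ne_c _ k
    subst h
    obtain ⟨x, hx⟩ := hB
    rw [Finset.mem_inter, Finset.mem_insert, Finset.mem_singleton] at hx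
    obtain ⟨hx1, hx2⟩ := hx
    obtain ⟨hxE, k, hkj, hk⟩ := hmemEdZ _ hx2
    rcases hx1 with rfl | rfl
    · simp only [Atom.c.injEq] at hk
      subst hk
      obtain ⟨y, hy⟩ := hH
      rw [Finset.mem_inter, Finset.mem_singleton] at hy
      obtain ⟨rfl, hy2⟩ := hy
      obtain ⟨hyE, hyc⟩ := (hmemZ _).1 hy2
      have hkj' : ¬ (i + 1 < j) := fun hlt => hyc (i+1) hlt rfl
      have : j = i + 1 := by omega
      rw [this] at hcj; exact hcj hyE
    · exact absurd hk (hαc k)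
  all_goals {
    subst h
    obtain ⟨x, hx⟩ := hB
    rw [Finset.mem_inter, Finset.mem_insert, Finset.mem_singleton] at hx
    obtain ⟨hx1, hx2⟩ := hx
    obtain ⟨-, k, -, hk⟩ := hmemEdZ _ hx2
    rcases hx1 with rfl | rfl <;> simp at hk }
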